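/- arXiv:1508.04310 — 3 statements merged into one kernel-verified Lean document; each statement's English description precedes it below -/
import Mathlib

section
/- Let f₀ be differentiable with L₀-Lipschitz gradient, and suppose ‖∇f₀(p*)‖ ≤ D₀. Then for any p, |f₀(p) - f₀(p*)| ≤ D₀‖p - p*‖ + (L₀/2)‖p - p*‖². Consequently, if f = f₀ + ρψ is μ₀-strongly convex with minimizer p* and |f(p) - f(p*)| ≤ ε, then |f₀(p) - f₀(p*)| ≤ D₀√(2ε/μ₀) + (L₀/2)(2ε/μ₀). -/
open RealInnerProductSpace

/-- If `f₀` has an `L₀`-Lipschitz gradient (encoded by the quadratic bound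
`|f₀ p₂ - f₀ p₁ - ⟪∇f₀ p₁, p₂ - p₁⟫| ≤ L₀/2 ‖p₂ - p₁‖²`) and `‖∇f₀(pstar)‖ ≤ D₀`, then
`|f₀ p - f₀ pstar| ≤ D₀ ‖p - pstar‖ + (L₀/2)‖p - pstar‖²`; consequently if
`f = f₀ + ρ ψ` is `μ₀`-strongly convex with minimizer `pstar` and `|f p - f pstar| ≤ ε`
then `|f₀ p - f₀ pstar| ≤ D₀ √(2ε/μ₀) + (L₀/2)(2ε/μ₀)`. -/
theorem stmt2 {n : ℕ} (f₀ ψ : EuclideanSpace ℝ (Fin n) → ℝ)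
    (g₀ gf : EuclideanSpace ℝ (Fin n) → EuclideanSpace ℝ (Fin n))
    (L₀ μ₀ ρ D₀ ε : ℝ) (hL₀ : 0 ≤ L₀) (hμ₀ : 0 < μ₀) (hρ : 0 < ρ) (hε : 0 ≤ ε)
    (hdiff₀ : ∀ p, HasGradientAt f₀ (g₀ p) p)
    (hF : ∀ p₁ p₂, |f₀ p₂ - f₀ p₁ - ⟪g₀ p₁, p₂ - p₁⟫| ≤ L₀ / 2 * ‖p₂ - p₁‖ ^ 2)
    (hψ : ∀ p, 0 ≤ ψ p)
    (f : EuclideanSpace ℝ (Fin n) → ℝ) (hf : ∀ p, f p = f₀ p + ρ * ψ p)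
    (hdifff : ∀ p, HasGradientAt f (gf p) p)
    (hsc : ∀ p₁ p₂, f p₁ + ⟪gf p₁, p₂ - p₁⟫ + μ₀ / 2 * ‖p₂ - p₁‖ ^ 2 ≤ f p₂)
    (pstar : EuclideanSpace ℝ (Fin n)) (hmin : ∀ p, f pstar ≤ f p)
    (hD₀ : ‖g₀ pstar‖ ≤ D₀) :
    (∀ p, |f₀ p - f₀ pstar| ≤ D₀ * ‖p - pstar‖ + L₀ / 2 * ‖p - pstar‖ ^ 2) ∧
    (∀ p, |f p - f pstar| ≤ ε →
      |f₀ p - f₀ pstar| ≤ D₀ * Real.sqrt (2 * ε / μ₀) + L₀ / 2 * (2 * ε / μ₀)) := by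
  have hD₀0 : 0 ≤ D₀ := le_trans (norm_nonneg _) hD₀
  have part1 : ∀ p, |f₀ p - f₀ pstar| ≤ D₀ * ‖p - pstar‖ + L₀ / 2 * ‖p - pstar‖ ^ 2 := by
    intro p
    have h1 := hF pstar p
    have h2 : |⟪g₀ pstar, p - pstar⟫| ≤ D₀ * ‖p - pstar‖ := by
      calc |⟪g₀ pstar, p - pstar⟫| ≤ ‖g₀ pstar‖ * ‖p - pstar‖ := abs_real_inner_le_norm _ _
        _ ≤ D₀ * ‖p - pstar‖ := by gcongr
    calc |f₀ p - f₀ pstar|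
        = |⟪g₀ pstar, p - pstar⟫ + (f₀ p - f₀ pstar - ⟪g₀ pstar, p - pstar⟫)| := by ring_nf
      _ ≤ |⟪g₀ pstar, p - pstar⟫| + |f₀ p - f₀ pstar - ⟪g₀ pstar, p - pstar⟫| := abs_add_le _ _
      _ ≤ D₀ * ‖p - pstar‖ + L₀ / 2 * ‖p - pstar‖ ^ 2 := add_le_add h2 h1
  refine ⟨part1, fun p hp => ?_⟩
  have hgf0 : gf pstar = 0 := by
    have hloc : IsLocalMin f pstar := (isMinOn_univ_iff.mpr hmin).isLocalMin Filter.univ_mem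
    have := hloc.hasFDerivAt_eq_zero (hdifff pstar).hasFDerivAt
    have h2 := DFunLike.congr_fun this (gf pstar)
    simp only [ContinuousLinearMap.zero_apply] at h2
    rw [InnerProductSpace.toDual_apply_apply] at h2
    exact inner_self_eq_zero.mp h2
  have hsq : ‖p - pstar‖ ^ 2 ≤ 2 * ε / μ₀ := by
    have h := hsc pstar p
    rw [hgf0] at h
    simp only [inner_zero_left] at h
    have hfp : f p - f pstar ≤ ε := le_trans (le_abs_self _) hp
    rw [le_div_iff₀ hμ₀]
    nlinarith
  have hn : ‖p - pstar‖ ≤ Real.sqrt (2 * ε / μ₀) := by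
    have := Real.sqrt_le_sqrt hsq
    rwa [Real.sqrt_sq (norm_nonneg _)] at this
  calc |f₀ p - f₀ pstar| ≤ D₀ * ‖p - pstar‖ + L₀ / 2 * ‖p - pstar‖ ^ 2 := part1 p
    _ ≤ D₀ * Real.sqrt (2 * ε / μ₀) + L₀ / 2 * (2 * ε / μ₀) := by gcongr
end

section
/- Under the hypotheses above, if additionally f₀ has L₀-Lipschitz gradient, then ‖∇f₀(p*)‖ ≤ L₀√((2ρ/μ₀)ψ(p_u)). -/
open RealInnerProductSpace

/-- Under the hypotheses of the previous statement, if additionally `∇f₀` is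
`L₀`-Lipschitz, then `‖∇f₀(pstar)‖ ≤ L₀ √((2ρ/μ₀) ψ(p_u))`. -/
theorem stmt6 {n : ℕ} (f₀ ψ : EuclideanSpace ℝ (Fin n) → ℝ)
    (g₀ : EuclideanSpace ℝ (Fin n) → EuclideanSpace ℝ (Fin n))
    (μ₀ ρ L₀ : ℝ) (hμ₀ : 0 < μ₀) (hρ : 0 < ρ) (hL₀ : 0 ≤ L₀)
    (hdiff : ∀ p, HasGradientAt f₀ (g₀ p) p)
    (hsc : ∀ p₁ p₂, f₀ p₁ + ⟪g₀ p₁, p₂ - p₁⟫ + μ₀ / 2 * ‖p₂ - p₁‖ ^ 2 ≤ f₀ p₂)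
    (hlip : ∀ p₁ p₂, ‖g₀ p₁ - g₀ p₂‖ ≤ L₀ * ‖p₁ - p₂‖)
    (hψ : ∀ p, 0 ≤ ψ p)
    (pu : EuclideanSpace ℝ (Fin n)) (hpu : g₀ pu = 0)
    (pstar : EuclideanSpace ℝ (Fin n))
    (hmin : ∀ p, f₀ pstar + ρ * ψ pstar ≤ f₀ p + ρ * ψ p) :
    ‖g₀ pstar‖ ≤ L₀ * Real.sqrt (2 * ρ / μ₀ * ψ pu) := by
  have h1 := hsc pu pstar
  rw [hpu, inner_zero_left] at h1
  have h2 := hmin pu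
  have hψs := hψ pstar
  have hsq : ‖pstar - pu‖ ^ 2 ≤ 2 * ρ / μ₀ * ψ pu := by
    rw [div_mul_eq_mul_div, le_div_iff₀ hμ₀]
    nlinarith
  have hle : ‖pstar - pu‖ ≤ Real.sqrt (2 * ρ / μ₀ * ψ pu) := by
    rw [Real.le_sqrt (norm_nonneg _) (by have := hψ pu; positivity)]
    exact hsq
  calc ‖g₀ pstar‖ = ‖g₀ pstar - g₀ pu‖ := by rw [hpu, sub_zero]
    _ ≤ L₀ * ‖pstar - pu‖ := hlip pstar pu
    _ ≤ L₀ * Real.sqrt (2 * ρ / μ₀ * ψ pu) := by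
        exact mul_le_mul_of_nonneg_left hle hL₀
end

section
/- Let p^{opt} minimize f₀ over the admissible set {ψ = 0}, let p* minimize f = f₀ + ρψ, let p_ψ be the closest admissible point to p*, and suppose ‖∇f₀(p*)‖ ≤ D₀, f₀ has L₀-Lipschitz gradient, and ψ(p) ≥ β·d(p, {ψ=0})² for all p with β > 0. Then |f₀(p^{opt}) - f₀(p*)| ≤ D₀√(ψ(p*)/β) + (L₀/2)(ψ(p*)/β). -/
open RealInnerProductSpace

/-- Let `popt` minimize `f₀` over the admissible set `A = {ψ = 0}`, `pstar` minimize
`f₀ + ρψ`, `pψ` the closest admissible point to `pstar`. If `‖∇f₀(pstar)‖ ≤ D₀`,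
`f₀ ∈ F¹_{L₀}` and `ψ(p) ≥ β d(p, A)²`, then
`|f₀(popt) - f₀(pstar)| ≤ D₀ √(ψ(pstar)/β) + (L₀/2)(ψ(pstar)/β)`. -/
theorem stmt9 {n : ℕ} (f₀ ψ : EuclideanSpace ℝ (Fin n) → ℝ)
    (g₀ : EuclideanSpace ℝ (Fin n) → EuclideanSpace ℝ (Fin n))
    (ρ L₀ D₀ β : ℝ) (hρ : 0 < ρ) (hL₀ : 0 ≤ L₀) (hβ : 0 < β)
    (hdiff : ∀ p, HasGradientAt f₀ (g₀ p) p)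
    (hF : ∀ p₁ p₂, f₀ p₂ ≤ f₀ p₁ + ⟪g₀ p₁, p₂ - p₁⟫ + L₀ / 2 * ‖p₂ - p₁‖ ^ 2)
    (hψ : ∀ p, 0 ≤ ψ p)
    (A : Set (EuclideanSpace ℝ (Fin n))) (hA : A = {p | ψ p = 0})
    (hcoerc : ∀ p, β * (Metric.infDist p A) ^ 2 ≤ ψ p)
    (popt : EuclideanSpace ℝ (Fin n)) (hpoptA : popt ∈ A)
    (hpopt : ∀ p ∈ A, f₀ popt ≤ f₀ p)
    (pstar : EuclideanSpace ℝ (Fin n))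
    (hmin : ∀ p, f₀ pstar + ρ * ψ pstar ≤ f₀ p + ρ * ψ p)
    (pψ : EuclideanSpace ℝ (Fin n)) (hpψA : pψ ∈ A)
    (hpψ : ‖pstar - pψ‖ = Metric.infDist pstar A)
    (hD₀ : ‖g₀ pstar‖ ≤ D₀) :
    |f₀ popt - f₀ pstar| ≤
      D₀ * Real.sqrt (ψ pstar / β) + L₀ / 2 * (ψ pstar / β) := by
  set d := Metric.infDist pstar A with hd
  have hd0 : 0 ≤ d := Metric.infDist_nonneg
  have hψopt : ψ popt = 0 := by rw [hA] at hpoptA; exact hpoptA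
  have hD₀0 : 0 ≤ D₀ := le_trans (norm_nonneg _) hD₀
  -- lower bound: f₀ pstar ≤ f₀ popt
  have hlow : f₀ pstar ≤ f₀ popt := by
    have := hmin popt
    nlinarith [hψ pstar, hρ.le]
  -- d² ≤ ψ pstar / β
  have hd2 : d ^ 2 ≤ ψ pstar / β := by
    have := hcoerc pstar
    rw [le_div_iff₀ hβ]; nlinarith
  have hdsqrt : d ≤ Real.sqrt (ψ pstar / β) := by
    have h := Real.sqrt_le_sqrt hd2
    rwa [Real.sqrt_sq hd0] at h
  -- upper bound
  have hnorm : ‖pψ - pstar‖ = d := by rw [← hpψ, norm_sub_rev]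
  have hinner : ⟪g₀ pstar, pψ - pstar⟫ ≤ D₀ * d := by
    calc ⟪g₀ pstar, pψ - pstar⟫ ≤ ‖g₀ pstar‖ * ‖pψ - pstar‖ :=
          real_inner_le_norm _ _
      _ ≤ D₀ * d := by rw [hnorm]; exact mul_le_mul_of_nonneg_right hD₀ hd0
  have hup : f₀ popt ≤ f₀ pstar + D₀ * d + L₀ / 2 * d ^ 2 := by
    have h1 := hpopt pψ hpψA
    have h2 := hF pstar pψ
    rw [hnorm] at h2
    linarith
  have hle : f₀ popt - f₀ pstar ≤ D₀ * Real.sqrt (ψ pstar / β) + L₀ / 2 * (ψ pstar / β) := by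
    have := mul_le_mul_of_nonneg_left hdsqrt hD₀0
    have := mul_le_mul_of_nonneg_left hd2 (by linarith : (0:ℝ) ≤ L₀ / 2)
    linarith
  rw [abs_of_nonneg (by linarith)]
  exact hle
end
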